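/- Let O ⊆ P contain A. The linear map ξ : ℝ^P → ℝ^P defined by ξ(ε_{i,i}) = ε_{i,r(i,i)} and, for j ≠ i, ξ(ε_{i,j}) = ε_{i,r(i,j)} − ε_{i,r(i,j')} where j' is the ⋖-maximal element with j' ⋖ j and (i,j') ∈ O, is unimodular (its matrix has determinant ±1 and integer entries, with integer-entry inverse). -/

import Mathlib

open scoped Classical Pointwise

noncomputable section

/-- Position of `j` in the total order `1 ⋖ … ⋖ n ⋖ -n ⋖ … ⋖ -1` on `N`. -/
def ordKey (n : ℕ) (j : ℤ) : ℤ := if 0 < j then j else 2 * n + 1 + j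

/-- Membership in the type C Gelfand–Tsetlin poset `P`:
pairs `(i,j)` with `1 ≤ i ≤ n` and `i ≤ |j| ≤ n`. -/
def inP (n : ℕ) (p : ℤ × ℤ) : Prop :=
  1 ≤ p.1 ∧ p.1 ≤ (n : ℤ) ∧ p.1 ≤ |p.2| ∧ |p.2| ≤ (n : ℤ)

/-- The order relation `⪯` of `P`: `(i₁,j₁) ⪯ (i₂,j₂)` iff `i₁ ≤ i₂` and `j₁ ⩽̇ j₂`. -/
def ple (n : ℕ) (p q : ℤ × ℤ) : Prop :=
  p.1 ≤ q.1 ∧ ordKey n p.2 ≤ ordKey n q.2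

/-- Strict version of `⪯`. -/
def plt (n : ℕ) (p q : ℤ × ℤ) : Prop := ple n p q ∧ p ≠ q

/-- The elements of `N = {1,…,n,-n,…,-1}` listed in increasing `⋖` order. -/
def jList (n : ℕ) : List ℤ :=
  ((List.range n).map fun t => (t : ℤ) + 1) ++ ((List.range n).map fun t => (t : ℤ) - n)

/-- All pairs `(i,j)` with `i ∈ [1,n]`, `j ∈ N`, ordered first by `i` increasing,
then by `j` increasing with respect to `⋖`. -/
def posList (n : ℕ) : List (ℤ × ℤ) :=
  (List.range n).flatMap fun a => (jList n).map fun j => ((a : ℤ) + 1, j)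

/-- `P` as a finite set. -/
def Pfin (n : ℕ) : Finset (ℤ × ℤ) := (posList n).toFinset.filter (inP n)

/-- `N` as a finite set. -/
def Nfin (n : ℕ) : Finset ℤ := (jList n).toFinset

/-- The diagonal `A = {(i,i) : 1 ≤ i ≤ n}`. -/
def Aset (n : ℕ) : Finset (ℤ × ℤ) :=
  (Finset.range n).image fun t => (((t : ℤ) + 1, (t : ℤ) + 1) : ℤ × ℤ)

/-- Order ideals (downward closed subsets) of `P`. -/
def IsIdeal (n : ℕ) (J : Finset (ℤ × ℤ)) : Prop :=
  (∀ p ∈ J, inP n p) ∧ ∀ p ∈ J, ∀ q ∈ Pfin n, ple n q p → q ∈ J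

/-- The set of `≺`-maximal elements of `J`. -/
def maxPrec (n : ℕ) (J : Finset (ℤ × ℤ)) : Finset (ℤ × ℤ) :=
  J.filter fun p => ∀ q ∈ J, ple n p q → q = p

/-- `M_O(J) = (J ∩ O) ∪ max_≺(J)`. -/
def MO (n : ℕ) (O J : Finset (ℤ × ℤ)) : Finset (ℤ × ℤ) := (J ∩ O) ∪ maxPrec n J

/-- The permutation `w_M`: the product of the transpositions `s_{i,j}` over `(i,j) ∈ M`,
ordered first by `i` increasing and then by `j` increasing with respect to `⋖`
(the leftmost factor acts last). -/
def wPerm (n : ℕ) (M : Finset (ℤ × ℤ)) : Equiv.Perm ℤ :=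
  (((posList n).filter fun p => decide (p ∈ M)).map fun p => Equiv.swap p.1 p.2).prod

/-- `w^{O,J} = w_O⁻¹ ⬝ w_{M_O(J)}`. -/
def wOJ (n : ℕ) (O J : Finset (ℤ × ℤ)) : Equiv.Perm ℤ :=
  (wPerm n O)⁻¹ * wPerm n (MO n O J)

/-- The principal order ideal `⟨i,j⟩` of `(i,j) ∈ P`. -/
def princ (n : ℕ) (p : ℤ × ℤ) : Finset (ℤ × ℤ) := (Pfin n).filter fun q => ple n q p

/-- `r(i,j) = w^{O,⟨i,j⟩}(i)`. -/
def rMap (n : ℕ) (O : Finset (ℤ × ℤ)) (i j : ℤ) : ℤ := wOJ n O (princ n (i, j)) i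

/-- Inverse of `ordKey` (on the relevant range `[1, 2n]`). -/
def invOrdKey (n : ℕ) (t : ℤ) : ℤ := if t ≤ (n : ℤ) then t else t - (2 * n + 1)

/-- The `⋖`-maximal `j'` with `j' ⋖ j` and `(i,j') ∈ O`. -/
def prevO (n : ℕ) (O : Finset (ℤ × ℤ)) (i j : ℤ) : ℤ :=
  invOrdKey n (((((Nfin n).filter fun j' => (i, j') ∈ O ∧ ordKey n j' < ordKey n j).image
    (ordKey n)).max).unbotD 0)

/-- The pipe-dream linear transform `ξ` of `ℝ^P` (coordinates outside `P` are untouched):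
`ξ(ε_{i,i}) = ε_{i,r(i,i)}` and `ξ(ε_{i,j}) = ε_{i,r(i,j)} - ε_{i,r(i,j')}` for `j ≠ i`,
where `j'` is `⋖`-maximal with `j' ⋖ j` and `(i,j') ∈ O`. -/
def xiMap (n : ℕ) (O : Finset (ℤ × ℤ)) (x : (ℤ × ℤ) → ℝ) : (ℤ × ℤ) → ℝ := fun q =>
  if inP n q then
    (∑ j ∈ (Nfin n).filter (fun j => inP n (q.1, j) ∧ rMap n O q.1 j = q.2), x (q.1, j))
    - (∑ j ∈ (Nfin n).filter
        (fun j => inP n (q.1, j) ∧ j ≠ q.1 ∧ rMap n O q.1 (prevO n O q.1 j) = q.2), x (q.1, j))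
  else x q

/-- Indicator vector `1_{M_O(J)} ∈ ℝ^P`. -/
def indicMO (n : ℕ) (O J : Finset (ℤ × ℤ)) : (ℤ × ℤ) → ℝ := fun p =>
  if p ∈ MO n O J then 1 else 0

/-- The fundamental marked chain-order polytope `𝒬_O(ω_k)`:
the convex hull of the vectors `1_{M_O(J)}`, `J ∈ 𝒥ₖ`. -/
def QOfund (n : ℕ) (O : Finset (ℤ × ℤ)) (k : ℕ) : Set ((ℤ × ℤ) → ℝ) :=
  convexHull ℝ {x | ∃ J : Finset (ℤ × ℤ),
    IsIdeal n J ∧ (J ∩ Aset n).card = k ∧ x = indicMO n O J}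

/-- The marked chain-order polytope `𝒬_O(λ)` for `λ = a₁ω₁ + … + a_nω_n`:
the Minkowski sum `a₁𝒬_O(ω₁) + … + a_n𝒬_O(ω_n)`. -/
def QO (n : ℕ) (O : Finset (ℤ × ℤ)) (a : ℕ → ℕ) : Set ((ℤ × ℤ) → ℝ) :=
  ∑ k ∈ Finset.Icc 1 n, a k • QOfund n O k

/-- Integrality (lattice point) predicate. -/
def IsLat (x : (ℤ × ℤ) → ℝ) : Prop := ∀ p, ∃ m : ℤ, x p = m

/-- Type B: `λ(i) = a_i + … + a_{n-1} + a_n/2`. -/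
def lamB (n : ℕ) (a : ℕ → ℕ) (i : ℤ) : ℝ :=
  (∑ t ∈ Finset.Icc i.toNat (n - 1), (a t : ℝ)) + (a n : ℝ) / 2

/-- The type B poset polytope `𝒬^B_O(λ)` (H-description with factor `1/2`
on the coordinates in `B = {(i,-i)}`). -/
def QB (n : ℕ) (O : Finset (ℤ × ℤ)) (lam : ℤ → ℝ) : Set ((ℤ × ℤ) → ℝ) :=
  {x | (∀ i : ℤ, 1 ≤ i → i ≤ (n : ℤ) → x (i, i) = lam i) ∧
    (∀ p, inP n p → 0 ≤ x p) ∧ (∀ p, ¬ inP n p → x p = 0) ∧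
    ∀ (pq rs : ℤ × ℤ) (c : List (ℤ × ℤ)), pq ∈ O → inP n rs →
      (∀ q ∈ c, inP n q ∧ q ∉ O) →
      List.Chain' (plt n) (pq :: (c ++ [rs])) →
      (c.map x).sum ≤ x pq - (if rs.2 = -rs.1 then (1 : ℝ) / 2 else 1) * x rs}

/-- The point `x^{J,D}`. -/
def xJD (n : ℕ) (O J : Finset (ℤ × ℤ)) (D : Finset ℤ) : (ℤ × ℤ) → ℝ := fun p =>
  if p ∈ MO n O J then (if p.2 = -p.1 ∧ p.1 ∉ D then 2 else 1) else 0

/-- The projection `π : ℝ^P → ℝ^{P∖A}` (realized by zeroing the `A`-coordinates). -/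
def piA (x : (ℤ × ℤ) → ℝ) : (ℤ × ℤ) → ℝ := fun p => if p.2 = p.1 then 0 else x p

/-- The transformed type B poset polytope `Π^B_O(λ) = πξ(𝒬^B_O(λ))`. -/
def PiB (n : ℕ) (O : Finset (ℤ × ℤ)) (a : ℕ → ℕ) : Set ((ℤ × ℤ) → ℝ) :=
  (fun x => piA (xiMap n O x)) '' QB n O (lamB n a)

/-- The point `y^D ∈ ℝ^{P∖A}`. -/
def yD (D : Finset ℤ) : (ℤ × ℤ) → ℝ := fun p => if p.2 = -p.1 ∧ p.1 ∈ D then 1 else 0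


/-! ### Auxiliary development -/

section AuxDev

variable {n : ℕ}

private lemma flatMap_coe (l : List ℕ) :
    (l.flatMap fun a : ℕ => [((a : ℤ))]) = l.map (fun a : ℕ => (a : ℤ)) := by
  induction l with
  | nil => rfl
  | cons b t ih => simp [List.flatMap_cons, ih]

lemma jList_norm : jList n =
    ((List.range n).map (fun t : ℕ => ((t : ℤ) + 1)))
      ++ ((List.range n).map (fun t : ℕ => ((t : ℤ) - n))) := by
  unfold jList
  simp [← List.flatMap_def, flatMap_coe, List.map_map, Function.comp_def]

lemma ordKey_of_pos {j : ℤ} (h : 0 < j) : ordKey n j = j := if_pos h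

lemma ordKey_of_nonpos {j : ℤ} (h : ¬ 0 < j) : ordKey n j = 2*n+1+j := if_neg h

lemma abs_le_ordKey {j : ℤ} (h : |j| ≤ (n : ℤ)) : |j| ≤ ordKey n j := by
  unfold ordKey
  simp only [Int.abs_eq_natAbs] at *
  split_ifs <;> omega

lemma ordKey_le {j : ℤ} (h0 : j ≠ 0) (h : |j| ≤ (n : ℤ)) : ordKey n j ≤ 2*n := by
  unfold ordKey
  simp only [Int.abs_eq_natAbs] at *
  split_ifs <;> omega

lemma ordKey_invOrdKey {t : ℤ} (h1 : 1 ≤ t) (h2 : t ≤ 2*n) :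
    ordKey n (invOrdKey n t) = t := by
  unfold ordKey invOrdKey; split_ifs <;> omega

lemma invOrdKey_ordKey {b : ℤ} (h1 : b ≠ 0) (h2 : |b| ≤ (n : ℤ)) :
    invOrdKey n (ordKey n b) = b := by
  unfold ordKey invOrdKey
  simp only [Int.abs_eq_natAbs] at *
  split_ifs <;> omega

lemma ordKey_inj {b b' : ℤ} (h1 : b ≠ 0) (h2 : |b| ≤ (n : ℤ)) (h1' : b' ≠ 0)
    (h2' : |b'| ≤ (n : ℤ)) (h : ordKey n b = ordKey n b') : b = b' := by
  have e1 := invOrdKey_ordKey (n := n) h1 h2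
  have e2 := invOrdKey_ordKey (n := n) h1' h2'
  rw [h] at e1
  rw [← e1, e2]

lemma mem_jList {x : ℤ} : x ∈ jList n ↔ (1 ≤ |x| ∧ |x| ≤ (n : ℤ)) := by
  rw [jList_norm]
  simp only [List.mem_append, List.mem_map, List.mem_range, Int.abs_eq_natAbs]
  constructor
  · rintro (⟨t, ht, rfl⟩ | ⟨t, ht, rfl⟩) <;> omega
  · rintro ⟨h1, h2⟩
    rcases lt_or_ge 0 x with hx | hx
    · exact Or.inl ⟨(x - 1).toNat, by omega, by omega⟩
    · exact Or.inr ⟨(x + n).toNat, by omega, by omega⟩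

lemma jList_eq : jList n = (List.range (2*n)).map (fun t : ℕ => invOrdKey n ((t : ℤ)+1)) := by
  rw [jList_norm, two_mul, List.range_add, List.map_append, List.map_map]
  congr 1
  · apply List.map_congr_left
    intro t ht
    simp only [List.mem_range] at ht
    unfold invOrdKey; split_ifs <;> omega
  · apply List.map_congr_left
    intro t ht
    simp only [List.mem_range] at ht
    simp only [Function.comp_apply]
    unfold invOrdKey; split_ifs <;> omega

lemma jList_pairwise : (jList n).Pairwise (fun u v => ordKey n u < ordKey n v) := by
  rw [jList_eq, List.pairwise_map]
  refine (List.pairwise_lt_range (n := 2*n)).imp_of_mem ?_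
  intro a b ha hb hab
  simp only [List.mem_range] at ha hb
  rw [ordKey_invOrdKey (by omega) (by omega), ordKey_invOrdKey (by omega) (by omega)]
  omega

lemma jList_nodup : (jList n).Nodup := by
  have := jList_pairwise (n := n)
  exact List.Pairwise.imp (fun h => by rintro rfl; omega) this

lemma posList_eq : posList n =
    (List.range n).flatMap fun a : ℕ => (jList n).map fun j => ((a : ℤ) + 1, j) := by
  unfold posList
  simp [flatMap_coe, List.flatMap_map]

lemma mem_posList {p : ℤ × ℤ} :
    p ∈ posList n ↔ (1 ≤ p.1 ∧ p.1 ≤ (n : ℤ) ∧ p.2 ∈ jList n) := by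
  rw [posList_eq]
  simp only [List.mem_flatMap, List.mem_map, List.mem_range]
  constructor
  · rintro ⟨a, ha, j, hj, rfl⟩; exact ⟨by omega, by omega, hj⟩
  · rintro ⟨h1, h2, hj⟩
    refine ⟨(p.1 - 1).toNat, by omega, p.2, hj, ?_⟩
    obtain ⟨p1, p2⟩ := p
    simp only [Prod.mk.injEq]
    refine ⟨?_, trivial⟩
    simp only at h1 h2 ⊢; omega

lemma mem_Pfin {p : ℤ × ℤ} : p ∈ Pfin n ↔ inP n p := by
  unfold Pfin
  rw [Finset.mem_filter, List.mem_toFinset, mem_posList]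
  unfold inP
  constructor
  · tauto
  · intro h
    refine ⟨⟨h.1, h.2.1, mem_jList.2 ⟨?_, h.2.2.2⟩⟩, h⟩
    have := h.1; have := h.2.2.1; omega

/-- generic: filter of a list sorted (weakly) by an integer key splits at a threshold. -/
lemma sorted_filter_split {α : Type*} (key : α → ℤ) :
    ∀ (l : List α), l.Pairwise (fun u v => key u ≤ key v) → ∀ (Q : α → Bool) (c : ℤ),
      l.filter Q = l.filter (fun b => Q b && decide (key b ≤ c))
        ++ l.filter (fun b => Q b && decide (c < key b)) := by
  intro l
  induction l with
  | nil => intro _ _ _; simp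
  | cons b t ih =>
    intro hp Q c
    have ht := (List.pairwise_cons.mp hp).2
    have hall := (List.pairwise_cons.mp hp).1
    rcases le_or_gt (key b) c with hbc | hbc
    · have h2 : (Q b && decide (c < key b)) = false := by
        simp only [Bool.and_eq_false_iff, decide_eq_false_iff_not, not_lt]
        right; exact hbc
      simp only [List.filter_cons, h2, Bool.and_eq_true, decide_eq_true_eq]
      rw [ih ht Q c]
      rcases hq : Q b with _ | _ <;> simp [hbc]
    · have hA : t.filter (fun x => Q x && decide (key x ≤ c)) = [] := by
        rw [List.filter_eq_nil_iff]
        intro x hx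
        have := hall x hx
        simp only [Bool.and_eq_true, decide_eq_true_eq, not_and]
        intro _; omega
      have hA' : (Q b && decide (key b ≤ c)) = false := by
        simp only [Bool.and_eq_false_iff, decide_eq_false_iff_not, not_le]
        right; omega
      simp only [List.filter_cons, hA', Bool.and_eq_true, decide_eq_true_eq]
      rw [ih ht Q c, hA]
      rcases hq : Q b with _ | _ <;> simp [hbc, hA, hq]

lemma filter_eq_singleton {α : Type*} :
    ∀ (l : List α), l.Nodup → ∀ (x : α), x ∈ l → ∀ (P : α → Bool),
      (∀ b ∈ l, (P b = true ↔ b = x)) → l.filter P = [x] := by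
  intro l
  induction l with
  | nil => intro _ x hx; simp at hx
  | cons b t ih =>
    intro hnd x hx P hP
    rcases List.mem_cons.mp hx with rfl | hxt
    · have ht : t.filter P = [] := by
        rw [List.filter_eq_nil_iff]
        intro a ha hPa
        have : a = x := (hP a (List.mem_cons_of_mem _ ha)).1 hPa
        subst this
        exact (List.nodup_cons.mp hnd).1 ha
      have hx' : P x = true := (hP x (List.mem_cons_self)).2 rfl
      simp [List.filter_cons, ht, hx']
    · have hb : P b = false := by
        rcases h : P b with _ | _
        · rfl
        · exfalso
          have : b = x := (hP b (List.mem_cons_self)).1 h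
          subst this
          exact (List.nodup_cons.mp hnd).1 hxt
      simp only [List.filter_cons, hb]
      exact ih (List.nodup_cons.mp hnd).2 x hxt P (fun a ha => hP a (List.mem_cons_of_mem _ ha))

lemma flatMap_single {α β : Type*} :
    ∀ (l : List α), l.Nodup → ∀ (t₀ : α), t₀ ∈ l → ∀ (g : α → List β),
      (∀ t ∈ l, t ≠ t₀ → g t = []) → l.flatMap g = g t₀ := by
  intro l
  induction l with
  | nil => intro _ t₀ h; simp at h
  | cons b t ih =>
    intro hnd t₀ ht₀ g hg
    rcases List.mem_cons.mp ht₀ with rfl | htt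
    · have ht : t.flatMap g = [] := by
        apply List.flatMap_eq_nil_iff.mpr
        intro a ha
        exact hg a (List.mem_cons_of_mem _ ha)
          (by rintro rfl; exact (List.nodup_cons.mp hnd).1 ha)
      rw [List.flatMap_cons, ht, List.append_nil]
    · have hb : g b = [] :=
        hg b (List.mem_cons_self)
          (by rintro rfl; exact (List.nodup_cons.mp hnd).1 htt)
      rw [List.flatMap_cons, hb, List.nil_append]
      exact ih (List.nodup_cons.mp hnd).2 t₀ htt g (fun a ha => hg a (List.mem_cons_of_mem _ ha))


/-! ### Permutation product lemmas -/

lemma perm_inv_apply_self (f : Equiv.Perm ℤ) (x : ℤ) : f⁻¹ (f x) = x :=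
  Equiv.Perm.inv_eq_iff_eq.mpr rfl

lemma perm_apply_inv_self (f : Equiv.Perm ℤ) (x : ℤ) : f (f⁻¹ x) = x :=
  (Equiv.eq_symm_apply f).mp rfl

lemma prod_swap_fix : ∀ (l : List (ℤ × ℤ)) (x : ℤ), (∀ p ∈ l, p.1 ≠ x ∧ p.2 ≠ x) →
    (l.map fun p => Equiv.swap p.1 p.2).prod x = x := by
  intro l
  induction l with
  | nil => intro x _; simp
  | cons p t ih =>
    intro x h
    rw [List.map_cons, List.prod_cons, Equiv.Perm.mul_apply,
      ih x (fun q hq => h q (List.mem_cons_of_mem _ hq))]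
    exact Equiv.swap_apply_of_ne_of_ne (Ne.symm (h p (List.mem_cons_self)).1)
      (Ne.symm (h p (List.mem_cons_self)).2)

lemma prod_swap_fix' : ∀ (l : List ℤ) (a x : ℤ), a ≠ x → x ∉ l →
    (l.map fun t => Equiv.swap a t).prod x = x := by
  intro l
  induction l with
  | nil => intro a x _ _; simp
  | cons b t ih =>
    intro a x hax hxl
    rw [List.map_cons, List.prod_cons, Equiv.Perm.mul_apply,
      ih a x hax (fun h => hxl (List.mem_cons_of_mem _ h))]
    exact Equiv.swap_apply_of_ne_of_ne (Ne.symm hax)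
      (fun h => hxl (h ▸ List.mem_cons_self))

lemma prod_swap_last (l : List ℤ) (a b : ℤ) (hb : b ≠ a) (hbl : b ∉ l) :
    (((l ++ [b]).map fun t => Equiv.swap a t).prod) a = b := by
  rw [List.map_append, List.prod_append, Equiv.Perm.mul_apply]
  simp only [List.map_cons, List.map_nil, List.prod_cons, List.prod_nil, mul_one]
  rw [Equiv.swap_apply_left]
  exact prod_swap_fix' l a b (Ne.symm hb) hbl

lemma mem_wPerm_list {M : Finset (ℤ × ℤ)} {p : ℤ × ℤ} :
    p ∈ (posList n).filter (fun p => decide (p ∈ M)) ↔ p ∈ posList n ∧ p ∈ M := by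
  rw [List.mem_filter, decide_eq_true_eq]

lemma wPerm_apply_of_fix {M : Finset (ℤ × ℤ)} {x : ℤ} (h : ∀ p ∈ M, p.1 ≠ x ∧ p.2 ≠ x) :
    wPerm n M x = x := by
  unfold wPerm
  exact prod_swap_fix _ x (fun p hp => h p (mem_wPerm_list.1 hp).2)

lemma wPerm_fix {M : Finset (ℤ × ℤ)} {T : Set ℤ} (hM : ∀ p ∈ M, p.1 ∈ T ∧ p.2 ∈ T)
    {x : ℤ} (hx : x ∉ T) : wPerm n M x = x := by
  apply wPerm_apply_of_fix
  intro p hp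
  exact ⟨fun h => hx (h ▸ (hM p hp).1), fun h => hx (h ▸ (hM p hp).2)⟩

lemma wPerm_mem {M : Finset (ℤ × ℤ)} {T : Set ℤ} (hM : ∀ p ∈ M, p.1 ∈ T ∧ p.2 ∈ T)
    {x : ℤ} (hx : x ∈ T) : wPerm n M x ∈ T := by
  by_contra hy
  have h1 : wPerm n M (wPerm n M x) = wPerm n M x := wPerm_fix hM hy
  have h2 : wPerm n M x = x := (wPerm n M).injective h1
  exact hy (by rw [h2]; exact hx)

lemma wPerm_inv_fix {M : Finset (ℤ × ℤ)} {T : Set ℤ} (hM : ∀ p ∈ M, p.1 ∈ T ∧ p.2 ∈ T)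
    {x : ℤ} (hx : x ∉ T) : (wPerm n M)⁻¹ x = x := by
  have h1 : wPerm n M x = x := wPerm_fix hM hx
  calc (wPerm n M)⁻¹ x = (wPerm n M)⁻¹ (wPerm n M x) := by rw [h1]
    _ = x := perm_inv_apply_self _ _

lemma wPerm_inv_mem {M : Finset (ℤ × ℤ)} {T : Set ℤ} (hM : ∀ p ∈ M, p.1 ∈ T ∧ p.2 ∈ T)
    {x : ℤ} (hx : x ∈ T) : (wPerm n M)⁻¹ x ∈ T := by
  by_contra hy
  have h1 : wPerm n M ((wPerm n M)⁻¹ x) = (wPerm n M)⁻¹ x := wPerm_fix hM hy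
  rw [perm_apply_inv_self] at h1
  exact hy (by rw [← h1]; exact hx)

/-! ### Row decomposition -/

private lemma pairwise_of_true {α : Type*} {R : α → α → Prop} (h : ∀ x y, R x y) :
    ∀ (l : List α), l.Pairwise R := by
  intro l; induction l with
  | nil => exact List.Pairwise.nil
  | cons b t ih => exact List.Pairwise.cons (fun y _ => h b y) ih

private lemma pairwise_flatMap {α β : Type*} {R : β → β → Prop} {f : α → List β} :
    ∀ (l : List α), l.Pairwise (fun a b => ∀ x ∈ f a, ∀ y ∈ f b, R x y) →
      (∀ a ∈ l, (f a).Pairwise R) → (l.flatMap f).Pairwise R := by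
  intro l
  induction l with
  | nil => intro _ _; simp
  | cons b t ih =>
    intro hp hall
    rw [List.flatMap_cons, List.pairwise_append]
    refine ⟨hall b (List.mem_cons_self),
      ih (List.pairwise_cons.mp hp).2 (fun a ha => hall a (List.mem_cons_of_mem _ ha)), ?_⟩
    intro x hx y hy
    rw [List.mem_flatMap] at hy
    obtain ⟨a, ha, hya⟩ := hy
    exact (List.pairwise_cons.mp hp).1 a ha x hx y hya

lemma posList_pairwise_fst : (posList n).Pairwise (fun p q => p.1 ≤ q.1) := by
  rw [posList_eq]
  apply pairwise_flatMap
  · refine (List.pairwise_lt_range (n := n)).imp_of_mem ?_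
    intro a b _ _ hab
    intro x hx y hy
    rw [List.mem_map] at hx hy
    obtain ⟨j, _, rfl⟩ := hx
    obtain ⟨j', _, rfl⟩ := hy
    simp only
    omega
  · intro a _
    rw [List.pairwise_map]
    exact pairwise_of_true (fun x y => le_refl _) _

private lemma decide_mem_filter_eq {γ : Type*} [DecidableEq γ] {M : Finset γ}
    (Q : γ → Prop) [DecidablePred Q] (p : γ)
    {i1 : Decidable (p ∈ M.filter Q)} {i2 : Decidable (p ∈ M)} {i3 : Decidable (Q p)} :
    (@decide (p ∈ M.filter Q) i1) = ((@decide (p ∈ M) i2) && (@decide (Q p) i3)) := by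
  by_cases h1 : p ∈ M <;> by_cases h2 : Q p
  · rw [decide_eq_true (Finset.mem_filter.mpr ⟨h1, h2⟩), decide_eq_true h1, decide_eq_true h2]
    rfl
  · rw [decide_eq_false (fun hc => h2 (Finset.mem_filter.mp hc).2),
      decide_eq_false h2, Bool.and_false]
  · rw [decide_eq_false (fun hc => h1 (Finset.mem_filter.mp hc).1),
      decide_eq_false h1, Bool.false_and]
  · rw [decide_eq_false (fun hc => h1 (Finset.mem_filter.mp hc).1),
      decide_eq_false h1, Bool.false_and]

lemma wPerm_split (M : Finset (ℤ × ℤ)) (m : ℤ) :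
    wPerm n M = wPerm n (M.filter fun p => p.1 ≤ m) * wPerm n (M.filter fun p => m < p.1) := by
  unfold wPerm
  rw [← List.prod_append, ← List.map_append]
  congr 1
  have hs := sorted_filter_split (fun p : ℤ × ℤ => p.1) (posList n) posList_pairwise_fst
    (fun p => decide (p ∈ M)) m
  have e1 : (posList n).filter (fun p => decide (p ∈ M.filter fun p => p.1 ≤ m))
      = (posList n).filter (fun b => decide (b ∈ M) && decide (b.1 ≤ m)) := by
    apply List.filter_congr
    intro p _
    rw [decide_mem_filter_eq]
  have e2 : (posList n).filter (fun p => decide (p ∈ M.filter fun p => m < p.1))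
      = (posList n).filter (fun b => decide (b ∈ M) && decide (m < b.1)) := by
    apply List.filter_congr
    intro p _
    rw [decide_mem_filter_eq]
  rw [hs, ← e1, ← e2]

private lemma filter_flatMap {α β : Type*} (g : α → List β) (q : β → Bool) :
    ∀ (l : List α), (l.flatMap g).filter q = l.flatMap (fun x => (g x).filter q) := by
  intro l
  induction l with
  | nil => simp
  | cons b t ih => rw [List.flatMap_cons, List.flatMap_cons, List.filter_append, ih]

lemma wPerm_single_row {M : Finset (ℤ × ℤ)} {a : ℤ} (h1 : 1 ≤ a) (h2 : a ≤ (n : ℤ))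
    (hrow : ∀ p ∈ M, p.1 = a) :
    wPerm n M = (((jList n).filter fun b => decide ((a, b) ∈ M)).map
      fun b => Equiv.swap a b).prod := by
  unfold wPerm
  rw [posList_eq]
  rw [filter_flatMap]
  rw [flatMap_single (List.range n) (List.nodup_range (n := n)) (a - 1).toNat (by
      rw [List.mem_range]; omega)]
  · have ha : ((((a - 1).toNat : ℕ) : ℤ) + 1) = a := by omega
    rw [List.filter_map]
    rw [List.map_map]
    have e0 : (jList n).filter ((fun p => decide (p ∈ M)) ∘ (fun j => ((((a - 1).toNat : ℕ) : ℤ) + 1, j)))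
        = (jList n).filter (fun b => decide ((a, b) ∈ M)) := by
      apply List.filter_congr
      intro b _
      simp only [Function.comp_apply]
      rw [ha]
    rw [e0]
    congr 1
    apply List.map_congr_left
    intro b _
    simp only [Function.comp_apply]
    rw [ha]
  · intro t _ ht
    rw [List.filter_eq_nil_iff]
    intro p hp
    rw [List.mem_map] at hp
    obtain ⟨j, _, rfl⟩ := hp
    simp only [decide_eq_true_eq]
    intro hmem
    have := hrow _ hmem
    simp only at this
    omega

/-! ### Key bounds for row products -/

lemma swapProd_key_bounds {a : ℤ} (ha : 0 < a) :
    ∀ (l : List ℤ), l.Pairwise (fun u v => ordKey n u < ordKey n v) →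
      (∀ b ∈ l, a ≤ ordKey n b) → ∀ x, a < ordKey n x →
      a ≤ ordKey n ((l.map fun t => Equiv.swap a t).prod x) ∧
        ordKey n ((l.map fun t => Equiv.swap a t).prod x) ≤ ordKey n x := by
  intro l
  induction l with
  | nil =>
    intro _ _ x hx
    exact ⟨by simpa using le_of_lt hx, by simp⟩
  | cons b t ih =>
    intro hp hge x hx
    have hka : ordKey n a = a := ordKey_of_pos ha
    have hax : a ≠ x := fun h => by rw [← h, hka] at hx; omega
    rw [List.map_cons, List.prod_cons, Equiv.Perm.mul_apply]
    set r := (t.map fun t => Equiv.swap a t).prod x with hr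
    obtain ⟨ihr1, ihr2⟩ := ih (List.pairwise_cons.mp hp).2
      (fun b' hb' => hge b' (List.mem_cons_of_mem _ hb')) x hx
    by_cases hra : r = a
    · rw [hra, Equiv.swap_apply_left]
      have hxt : x ∈ t := by
        by_contra hxt
        have : r = x := prod_swap_fix' t a x hax hxt
        rw [hra] at this
        exact hax this
      have : ordKey n b < ordKey n x := (List.pairwise_cons.mp hp).1 x hxt
      exact ⟨hge b (List.mem_cons_self), le_of_lt this⟩
    · by_cases hrb : r = b
      · rw [hrb, Equiv.swap_apply_right, hka]
        exact ⟨le_refl _, le_of_lt hx⟩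
      · rw [Equiv.swap_apply_of_ne_of_ne (fun h => hra h) (fun h => hrb h)]
        exact ⟨ihr1, ihr2⟩

lemma rowProd_cutoff {a c : ℤ} (ha : 0 < a) (Q : ℤ → Bool) {x : ℤ}
    (hx : a < ordKey n x) (hxc : ordKey n x ≤ c) :
    (((jList n).filter fun b => Q b && decide (ordKey n b ≤ c)).map
        fun b => Equiv.swap a b).prod x
      = (((jList n).filter Q).map fun b => Equiv.swap a b).prod x := by
  have hs := sorted_filter_split (key := ordKey n) (jList n)
    (jList_pairwise.imp (fun h => le_of_lt h)) Q c
  rw [hs, List.map_append, List.prod_append, Equiv.Perm.mul_apply]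
  have hfix : (((jList n).filter fun b => Q b && decide (c < ordKey n b)).map
      fun b => Equiv.swap a b).prod x = x := by
    apply prod_swap_fix'
    · intro h
      rw [← h, ordKey_of_pos ha] at hx
      omega
    · intro hmem
      rw [List.mem_filter, Bool.and_eq_true, decide_eq_true_eq] at hmem
      omega
  rw [hfix]

/-! ### Cutoff removal -/

lemma wPerm_filter_empty {M : Finset (ℤ × ℤ)} (h : M = ∅) : wPerm n M = 1 := by
  subst h
  unfold wPerm
  rw [List.filter_eq_nil_iff.mpr (by intro p _; simp)]
  rfl

lemma cutoff_removal {O : Finset (ℤ × ℤ)} (hO : O ⊆ Pfin n) (c : ℤ) :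
    ∀ (k : ℕ), k ≤ n → ∀ x : ℤ, (k : ℤ) < ordKey n x → ordKey n x ≤ c →
      wPerm n (O.filter fun p => p.1 ≤ (k : ℤ) ∧ ordKey n p.2 ≤ c) x
        = wPerm n (O.filter fun p => p.1 ≤ (k : ℤ)) x := by
  intro k
  induction k with
  | zero =>
    intro _ x _ _
    have h1 : (O.filter fun p => p.1 ≤ ((0 : ℕ) : ℤ) ∧ ordKey n p.2 ≤ c) = ∅ := by
      apply Finset.filter_eq_empty_iff.mpr
      intro p hp
      have := (mem_Pfin.1 (hO hp)).1
      push_neg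
      intro h; omega
    have h2 : (O.filter fun p => p.1 ≤ ((0 : ℕ) : ℤ)) = ∅ := by
      apply Finset.filter_eq_empty_iff.mpr
      intro p hp
      have := (mem_Pfin.1 (hO hp)).1
      omega
    rw [wPerm_filter_empty h1, wPerm_filter_empty h2]
  | succ k ih =>
    intro hk x hx hxc
    have hk' : k ≤ n := by omega
    have hcast : (((k+1 : ℕ)) : ℤ) = (k : ℤ) + 1 := by push_cast; ring
    -- row decomposition of both sides
    rw [wPerm_split (O.filter fun p => p.1 ≤ ((k+1 : ℕ) : ℤ) ∧ ordKey n p.2 ≤ c) (k : ℤ),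
      wPerm_split (O.filter fun p => p.1 ≤ ((k+1 : ℕ) : ℤ)) (k : ℤ)]
    rw [Equiv.Perm.mul_apply, Equiv.Perm.mul_apply]
    -- identify the lower parts
    have hlow1 : ((O.filter fun p => p.1 ≤ ((k+1 : ℕ) : ℤ) ∧ ordKey n p.2 ≤ c).filter
        fun p => p.1 ≤ (k : ℤ)) = O.filter fun p => p.1 ≤ (k : ℤ) ∧ ordKey n p.2 ≤ c := by
      ext p
      simp only [Finset.mem_filter]
      constructor
      · rintro ⟨⟨h1, h2, h3⟩, h4⟩; exact ⟨h1, h4, h3⟩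
      · rintro ⟨h1, h2, h3⟩; exact ⟨⟨h1, by omega, h3⟩, h2⟩
    have hlow2 : ((O.filter fun p => p.1 ≤ ((k+1 : ℕ) : ℤ)).filter
        fun p => p.1 ≤ (k : ℤ)) = O.filter fun p => p.1 ≤ (k : ℤ) := by
      ext p
      simp only [Finset.mem_filter]
      constructor
      · rintro ⟨⟨h1, h2⟩, h4⟩; exact ⟨h1, h4⟩
      · rintro ⟨h1, h2⟩; exact ⟨⟨h1, by omega⟩, h2⟩
    rw [hlow1, hlow2]
    -- the two row-(k+1) pieces
    set Mc := (O.filter fun p => p.1 ≤ ((k+1 : ℕ) : ℤ) ∧ ordKey n p.2 ≤ c).filter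
      fun p => (k : ℤ) < p.1 with hMc
    set Mf := (O.filter fun p => p.1 ≤ ((k+1 : ℕ) : ℤ)).filter
      fun p => (k : ℤ) < p.1 with hMf
    have hrowc : ∀ p ∈ Mc, p.1 = (k : ℤ) + 1 := by
      intro p hp
      simp only [hMc, Finset.mem_filter] at hp
      omega
    have hrowf : ∀ p ∈ Mf, p.1 = (k : ℤ) + 1 := by
      intro p hp
      simp only [hMf, Finset.mem_filter] at hp
      omega
    have ha1 : (1 : ℤ) ≤ (k : ℤ) + 1 := by omega
    have ha2 : (k : ℤ) + 1 ≤ (n : ℤ) := by omega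
    rw [wPerm_single_row ha1 ha2 hrowc, wPerm_single_row ha1 ha2 hrowf]
    -- rewrite the Mc-row filter into cutoff form
    have hQc : ∀ b ∈ jList n, (decide (((k : ℤ) + 1, b) ∈ Mc))
        = (decide (((k : ℤ) + 1, b) ∈ Mf) && decide (ordKey n b ≤ c)) := by
      intro b _
      simp only [hMc, hMf, Finset.mem_filter]
      by_cases h1 : ((k : ℤ) + 1, b) ∈ O <;> by_cases h2 : ordKey n b ≤ c <;>
        simp [h1, h2, hcast] <;> omega
    rw [List.filter_congr hQc]
    have hxk : (k : ℤ) + 1 ≤ ordKey n x := by omega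
    rw [rowProd_cutoff (by omega : (0:ℤ) < (k:ℤ)+1) _ (by omega) hxc]
    -- bounds on the row output
    have hsorted : ((jList n).filter fun b => decide (((k : ℤ) + 1, b) ∈ Mf)).Pairwise
        (fun u v => ordKey n u < ordKey n v) := jList_pairwise.filter _
    have hge : ∀ b ∈ (jList n).filter fun b => decide (((k : ℤ) + 1, b) ∈ Mf),
        (k : ℤ) + 1 ≤ ordKey n b := by
      intro b hb
      rw [List.mem_filter, decide_eq_true_eq] at hb
      have hbO : ((k : ℤ) + 1, b) ∈ O := by
        have := hb.2
        simp only [hMf, Finset.mem_filter] at this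
        exact this.1.1
      have hin := mem_Pfin.1 (hO hbO)
      unfold inP at hin
      simp only at hin
      calc ((k : ℤ) + 1) ≤ |b| := hin.2.2.1
        _ ≤ ordKey n b := abs_le_ordKey hin.2.2.2
    obtain ⟨hb1, hb2⟩ := swapProd_key_bounds (by omega : (0:ℤ) < (k:ℤ)+1) _ hsorted hge x
      (by omega)
    exact ih hk' _ (by omega) (by omega)



/-! ### The formula for `rMap` -/

/-- The product of the swaps of rows `≥ i` of `O`. -/
def Bperm (n : ℕ) (O : Finset (ℤ × ℤ)) (i : ℤ) : Equiv.Perm ℤ :=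
  wPerm n (O.filter fun p => i ≤ p.1)

lemma mem_princ {p q : ℤ × ℤ} : q ∈ princ n p ↔ inP n q ∧ ple n q p := by
  unfold princ
  rw [Finset.mem_filter, mem_Pfin]

lemma inP_facts {i j : ℤ} (h : inP n (i, j)) :
    1 ≤ i ∧ i ≤ (n : ℤ) ∧ i ≤ |j| ∧ |j| ≤ (n : ℤ) ∧ j ≠ 0 ∧ i ≤ ordKey n j ∧
      ordKey n j ≤ 2*n ∧ j ∈ jList n := by
  obtain ⟨h1', h2', h3', h4'⟩ := h
  have h1 : 1 ≤ i := h1'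
  have h2 : i ≤ (n : ℤ) := h2'
  have h3 : i ≤ |j| := h3'
  have h4 : |j| ≤ (n : ℤ) := h4'
  have h5 : j ≠ 0 := by
    intro hj; rw [hj] at h3; simp at h3; omega
  have h6 : i ≤ ordKey n j := le_trans h3 (abs_le_ordKey h4)
  exact ⟨h1, h2, h3, h4, h5, h6, ordKey_le h5 h4, mem_jList.2 ⟨by omega, h4⟩⟩

lemma maxPrec_princ {i j : ℤ} (hij : inP n (i, j)) :
    maxPrec n (princ n (i, j)) = {(i, j)} := by
  have hmem : (i, j) ∈ princ n (i, j) :=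
    mem_princ.2 ⟨hij, le_refl _, le_refl _⟩
  ext p
  unfold maxPrec
  rw [Finset.mem_filter, Finset.mem_singleton]
  constructor
  · rintro ⟨hp, hmax⟩
    exact (hmax (i, j) hmem (mem_princ.1 hp).2).symm
  · rintro rfl
    refine ⟨hmem, ?_⟩
    intro q hq hle
    obtain ⟨hqP, hqle⟩ := mem_princ.1 hq
    obtain ⟨hq1, hq2⟩ := hqle
    obtain ⟨hl1, hl2⟩ := hle
    obtain ⟨f1, f2, f3, f4, f5, _⟩ := inP_facts hij
    obtain ⟨g1, g2, g3, g4, g5, _⟩ := inP_facts (show inP n (q.1, q.2) from hqP)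
    have e1 : q.1 = i := le_antisymm hq1 hl1
    have e2 : q.2 = j := ordKey_inj g5 g4 f5 f4 (le_antisymm hq2 hl2)
    exact Prod.ext e1 e2

lemma MO_princ {O : Finset (ℤ × ℤ)} {i j : ℤ} (hij : inP n (i, j)) :
    MO n O (princ n (i, j)) = (princ n (i, j) ∩ O) ∪ {(i, j)} := by
  unfold MO
  rw [maxPrec_princ hij]

lemma rMap_eq {O : Finset (ℤ × ℤ)} (hA : Aset n ⊆ O) (hO : O ⊆ Pfin n) {i j : ℤ}
    (hij : inP n (i, j)) : rMap n O i j = (Bperm n O i)⁻¹ j := by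
  obtain ⟨f1, f2, f3, f4, f5, f6, f7, f8⟩ := inP_facts hij
  set c := ordKey n j with hc
  set M := MO n O (princ n (i, j)) with hM
  have hMmem : ∀ p, p ∈ M ↔ ((inP n p ∧ p.1 ≤ i ∧ ordKey n p.2 ≤ c ∧ p ∈ O) ∨ p = (i, j)) := by
    intro p
    rw [hM, MO_princ hij, Finset.mem_union, Finset.mem_inter, Finset.mem_singleton, mem_princ]
    unfold ple
    tauto
  -- Step A : split M at row i-1
  have hA1 : M.filter (fun p => p.1 ≤ i - 1)
      = O.filter (fun p => p.1 ≤ i - 1 ∧ ordKey n p.2 ≤ c) := by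
    ext p
    rw [Finset.mem_filter, Finset.mem_filter, hMmem]
    constructor
    · rintro ⟨hp | rfl, hrow⟩
      · exact ⟨hp.2.2.2, hrow, hp.2.2.1⟩
      · simp only at hrow; omega
    · rintro ⟨hpO, hrow, hkey⟩
      exact ⟨Or.inl ⟨mem_Pfin.1 (hO hpO), by omega, hkey, hpO⟩, hrow⟩
  have hA2 : ∀ p ∈ M.filter (fun p => i - 1 < p.1), p.1 = i := by
    intro p hp
    rw [Finset.mem_filter, hMmem] at hp
    rcases hp.1 with h | rfl
    · have := hp.2; omega
    · rfl
  -- the row-i list of M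
  set Mhigh := M.filter (fun p => i - 1 < p.1) with hMhigh
  have hijM : (i, j) ∈ Mhigh := by
    rw [hMhigh, Finset.mem_filter, hMmem]
    exact ⟨Or.inr rfl, by simp⟩
  have hL2 : ((jList n).filter fun b =>
        decide ((i, b) ∈ Mhigh) && decide (c - 1 < ordKey n b)) = [j] := by
    apply filter_eq_singleton (jList n) jList_nodup j f8
    intro b hb
    rw [Bool.and_eq_true, decide_eq_true_eq, decide_eq_true_eq]
    constructor
    · rintro ⟨hbM, hbc⟩
      rw [hMhigh, Finset.mem_filter, hMmem] at hbM
      rcases hbM.1 with h | h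
      · have hbkey : ordKey n b = c := by
          have hkk : ordKey n b ≤ c := h.2.2.1
          omega
        obtain ⟨g1, g2, g3, g4, g5, _⟩ := inP_facts (show inP n (i, b) from h.1)
        exact ordKey_inj g5 g4 f5 f4 hbkey
      · exact congrArg Prod.snd h
    · rintro rfl
      refine ⟨hijM, by omega⟩
  have hrowprod : wPerm n Mhigh i = j := by
    rw [wPerm_single_row f1 f2 hA2]
    have hsplit := sorted_filter_split (key := ordKey n) (jList n)
      (jList_pairwise.imp (fun h => le_of_lt h)) (fun b => decide ((i, b) ∈ Mhigh)) (c - 1)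
    rw [hsplit, hL2]
    set L1 := (jList n).filter (fun b => decide ((i, b) ∈ Mhigh) && decide (ordKey n b ≤ c - 1))
      with hL1
    have hjL1 : j ∉ L1 := by
      intro hmem
      rw [hL1, List.mem_filter, Bool.and_eq_true, decide_eq_true_eq, decide_eq_true_eq] at hmem
      omega
    by_cases hji : j = i
    · have hL1nil : L1 = [] := by
        rw [hL1, List.filter_eq_nil_iff]
        intro b hb
        rw [Bool.and_eq_true, decide_eq_true_eq, decide_eq_true_eq, not_and]
        intro hbM
        rw [hMhigh, Finset.mem_filter, hMmem] at hbM
        have hcj : c = i := by rw [hc, hji, ordKey_of_pos (by omega)]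
        rcases hbM.1 with h | h
        · obtain ⟨g1, g2, g3, g4, g5, g6, _⟩ := inP_facts (show inP n (i, b) from h.1)
          omega
        · have hbj : b = j := congrArg Prod.snd h
          subst hbj
          omega
      rw [hL1nil, List.nil_append, hji]
      simp
    · exact prod_swap_last L1 i j hji hjL1
  -- assemble
  have hstepA : wPerm n M i = wPerm n (O.filter fun p => p.1 ≤ i - 1 ∧ ordKey n p.2 ≤ c) j := by
    rw [wPerm_split M (i - 1), Equiv.Perm.mul_apply, ← hMhigh, hrowprod, hA1]
  -- Step B : cutoff removal
  have hstepB : wPerm n (O.filter fun p => p.1 ≤ i - 1 ∧ ordKey n p.2 ≤ c) j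
      = wPerm n (O.filter fun p => p.1 ≤ i - 1) j := by
    have hcast : (((i - 1).toNat : ℕ) : ℤ) = i - 1 := by omega
    have := cutoff_removal hO c (i - 1).toNat (by omega) j (by omega) (by omega)
    rw [hcast] at this
    exact this
  -- Step C : split O
  have hstepC : wPerm n O = wPerm n (O.filter fun p => p.1 ≤ i - 1) * Bperm n O i := by
    rw [wPerm_split O (i - 1)]
    congr 1
    unfold Bperm
    congr 1
    ext p
    rw [Finset.mem_filter, Finset.mem_filter]
    constructor
    · rintro ⟨h1, h2⟩; exact ⟨h1, by omega⟩
    · rintro ⟨h1, h2⟩; exact ⟨h1, by omega⟩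
  -- conclude
  unfold rMap wOJ
  rw [← hM, Equiv.Perm.mul_apply, hstepA, hstepB, hstepC, mul_inv_rev,
    Equiv.Perm.mul_apply, perm_inv_apply_self]



/-! ### `prevO` and the shape of `ξ` -/

lemma mem_Nfin {x : ℤ} : x ∈ Nfin n ↔ (1 ≤ |x| ∧ |x| ≤ (n : ℤ)) := by
  unfold Nfin
  rw [List.mem_toFinset, mem_jList]

lemma diag_mem_O {O : Finset (ℤ × ℤ)} (hA : Aset n ⊆ O) {i : ℤ} (h1 : 1 ≤ i)
    (h2 : i ≤ (n : ℤ)) : (i, i) ∈ O := by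
  apply hA
  unfold Aset
  rw [Finset.mem_image]
  refine ⟨i - 1, ?_, by rw [sub_add_cancel]⟩
  simp only [bind_pure_comp, Finset.fmap_def, Finset.bind_def, Finset.mem_biUnion,
    Finset.mem_image, Finset.mem_range]
  exact ⟨(i - 1).toNat, by omega, by omega⟩

lemma prevO_facts {O : Finset (ℤ × ℤ)} (hA : Aset n ⊆ O) (hO : O ⊆ Pfin n) {i j : ℤ}
    (hij : inP n (i, j)) (hj : j ≠ i) :
    inP n (i, prevO n O i j) ∧ ordKey n (prevO n O i j) < ordKey n j := by
  obtain ⟨f1, f2, f3, f4, f5, f6, f7, f8⟩ := inP_facts hij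
  have hκj : i < ordKey n j := by
    simp only [Int.abs_eq_natAbs] at f3 f4
    by_cases h0 : 0 < j
    · rw [ordKey_of_pos h0]; omega
    · rw [ordKey_of_nonpos h0]; omega
  set S := (Nfin n).filter (fun j' => (i, j') ∈ O ∧ ordKey n j' < ordKey n j) with hS
  have hiS : i ∈ S := by
    rw [hS, Finset.mem_filter, mem_Nfin]
    refine ⟨⟨by rw [abs_of_pos (by omega : (0:ℤ) < i)]; omega,
      by rw [abs_of_pos (by omega : (0:ℤ) < i)]; omega⟩, diag_mem_O hA f1 f2, ?_⟩
    rw [ordKey_of_pos (by omega)]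
    exact hκj
  have hne : (S.image (ordKey n)).Nonempty := ⟨ordKey n i, Finset.mem_image_of_mem _ hiS⟩
  obtain ⟨t, ht⟩ := Finset.max_of_nonempty hne
  have htmem := Finset.mem_of_max ht
  rw [Finset.mem_image] at htmem
  obtain ⟨b, hbS, hbt⟩ := htmem
  rw [hS, Finset.mem_filter, mem_Nfin] at hbS
  obtain ⟨⟨hb1, hb2⟩, hbO, hbκ⟩ := hbS
  have hprev : prevO n O i j = b := by
    unfold prevO
    rw [← hS, ht]
    have : (WithBot.unbotD 0 (t : WithBot ℤ)) = t := rfl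
    rw [this, ← hbt]
    exact invOrdKey_ordKey (by simp only [Int.abs_eq_natAbs] at hb1; omega) hb2
  rw [hprev]
  exact ⟨mem_Pfin.1 (hO hbO), hbκ⟩

lemma Bperm_rows {O : Finset (ℤ × ℤ)} (hO : O ⊆ Pfin n) (i : ℤ) :
    ∀ p ∈ O.filter (fun p => i ≤ p.1),
      p.1 ∈ {y : ℤ | i ≤ |y| ∧ |y| ≤ (n : ℤ)} ∧ p.2 ∈ {y : ℤ | i ≤ |y| ∧ |y| ≤ (n : ℤ)} := by
  intro p hp
  rw [Finset.mem_filter] at hp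
  obtain ⟨h1, h2, h3, h4⟩ := mem_Pfin.1 (hO hp.1)
  have hi := hp.2
  constructor
  · constructor
    · rw [abs_of_pos (by omega : (0:ℤ) < p.1)]; omega
    · rw [abs_of_pos (by omega : (0:ℤ) < p.1)]; omega
  · exact ⟨le_trans hi h3, h4⟩

lemma Bperm_apply_mem {O : Finset (ℤ × ℤ)} (hO : O ⊆ Pfin n) {i x : ℤ}
    (hx : i ≤ |x| ∧ |x| ≤ (n : ℤ)) :
    i ≤ |Bperm n O i x| ∧ |Bperm n O i x| ≤ (n : ℤ) :=
  wPerm_mem (Bperm_rows hO i) hx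

lemma Bperm_inv_apply_mem {O : Finset (ℤ × ℤ)} (hO : O ⊆ Pfin n) {i x : ℤ}
    (hx : i ≤ |x| ∧ |x| ≤ (n : ℤ)) :
    i ≤ |(Bperm n O i)⁻¹ x| ∧ |(Bperm n O i)⁻¹ x| ≤ (n : ℤ) :=
  wPerm_inv_mem (Bperm_rows hO i) hx

lemma xiMap_formula {O : Finset (ℤ × ℤ)} (hA : Aset n ⊆ O) (hO : O ⊆ Pfin n)
    (x : (ℤ × ℤ) → ℝ) (q : ℤ × ℤ) (hq : inP n q) :
    xiMap n O x q = x (q.1, Bperm n O q.1 q.2)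
      - ∑ j ∈ (Nfin n).filter (fun j => inP n (q.1, j) ∧ j ≠ q.1 ∧
          prevO n O q.1 j = Bperm n O q.1 q.2), x (q.1, j) := by
  obtain ⟨i, k⟩ := q
  obtain ⟨f1, f2, f3, f4, f5, f6, f7, f8⟩ := inP_facts hq
  have hBk := Bperm_apply_mem hO ⟨f3, f4⟩
  have hBkP : inP n (i, Bperm n O i k) := ⟨f1, f2, hBk.1, hBk.2⟩
  unfold xiMap
  rw [if_pos hq]
  congr 1
  · have hfil : (Nfin n).filter (fun j => inP n ((i, k).1, j) ∧ rMap n O (i, k).1 j = (i, k).2)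
        = {Bperm n O i k} := by
      ext j
      rw [Finset.mem_filter, Finset.mem_singleton, mem_Nfin]
      constructor
      · rintro ⟨hN, hP, hr⟩
        rw [rMap_eq hA hO hP] at hr
        have := congrArg (Bperm n O i) hr
        rw [perm_apply_inv_self] at this
        exact this
      · rintro rfl
        refine ⟨⟨by have := hBk.1; omega, hBk.2⟩, hBkP, ?_⟩
        rw [rMap_eq hA hO hBkP]
        exact perm_inv_apply_self _ _
    rw [hfil, Finset.sum_singleton]
  · congr 1
    apply Finset.filter_congr
    intro j hjN
    rw [mem_Nfin] at hjN
    constructor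
    · rintro ⟨hP, hji, hr⟩
      refine ⟨hP, hji, ?_⟩
      obtain ⟨hpP, _⟩ := prevO_facts hA hO hP hji
      rw [rMap_eq hA hO hpP] at hr
      have := congrArg (Bperm n O i) hr
      rw [perm_apply_inv_self] at this
      exact this
    · rintro ⟨hP, hji, hr⟩
      refine ⟨hP, hji, ?_⟩
      obtain ⟨hpP, _⟩ := prevO_facts hA hO hP hji
      rw [rMap_eq hA hO hpP, hr]
      exact perm_inv_apply_self _ _



/-! ### The inverse map -/

/-- The inverse of `ξ`, defined coordinatewise by downward recursion on `⋖`. -/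
noncomputable def thetaAux (n : ℕ) (O : Finset (ℤ × ℤ)) (y : (ℤ × ℤ) → ℝ) (i : ℤ)
    (j : ℤ) : ℝ :=
  y (i, (Bperm n O i)⁻¹ j) +
    ∑ j' ∈ ((Nfin n).filter fun j' => inP n (i, j') ∧ j' ≠ i ∧ prevO n O i j' = j ∧
        ordKey n j < ordKey n j').attach,
      thetaAux n O y i j'.1
termination_by (2 * n + 1 - ordKey n j).toNat
decreasing_by
  have hm := j'.2
  rw [Finset.mem_filter, mem_Nfin] at hm
  obtain ⟨⟨ha1, ha2⟩, _, _, _, hk⟩ := hm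
  have h2n : ordKey n (j'.1) ≤ 2*n :=
    ordKey_le (by simp only [Int.abs_eq_natAbs] at ha1; omega) ha2
  omega

noncomputable def theta (n : ℕ) (O : Finset (ℤ × ℤ)) (y : (ℤ × ℤ) → ℝ) : (ℤ × ℤ) → ℝ :=
  fun q => if inP n q then thetaAux n O y q.1 q.2 else y q

lemma theta_filter_eq {O : Finset (ℤ × ℤ)} (hA : Aset n ⊆ O) (hO : O ⊆ Pfin n) {i j₀ : ℤ} :
    ((Nfin n).filter fun j' => inP n (i, j') ∧ j' ≠ i ∧ prevO n O i j' = j₀ ∧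
        ordKey n j₀ < ordKey n j')
      = ((Nfin n).filter fun j' => inP n (i, j') ∧ j' ≠ i ∧ prevO n O i j' = j₀) := by
  apply Finset.filter_congr
  intro j' _
  constructor
  · rintro ⟨h1, h2, h3, _⟩; exact ⟨h1, h2, h3⟩
  · rintro ⟨h1, h2, h3⟩
    refine ⟨h1, h2, h3, ?_⟩
    have hlt := (prevO_facts hA hO h1 h2).2
    rw [h3] at hlt
    exact hlt

lemma measure_lt {i j₀ : ℤ} (j' : ℤ) (hj' : inP n (i, j')) (hlt : ordKey n j₀ < ordKey n j') :
    (2 * n + 1 - ordKey n j').toNat < (2 * n + 1 - ordKey n j₀).toNat := by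
  obtain ⟨_, _, _, _, _, _, h7, _⟩ := inP_facts hj'
  omega

lemma theta_xi {O : Finset (ℤ × ℤ)} (hA : Aset n ⊆ O) (hO : O ⊆ Pfin n)
    (x : (ℤ × ℤ) → ℝ) : theta n O (xiMap n O x) = x := by
  funext q
  unfold theta
  by_cases hq : inP n q
  · rw [if_pos hq]
    obtain ⟨i, k⟩ := q
    dsimp only
    have H : ∀ (t : ℕ) (j₀ : ℤ), inP n (i, j₀) → (2 * n + 1 - ordKey n j₀).toNat < t →
        thetaAux n O (xiMap n O x) i j₀ = x (i, j₀) := by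
      intro t
      induction t with
      | zero => intro j₀ _ h; exact absurd h (Nat.not_lt_zero _)
      | succ t ih =>
        intro j₀ hj₀ hmeas
        obtain ⟨f1, f2, f3, f4, f5, f6, f7, f8⟩ := inP_facts hj₀
        have hBinv := Bperm_inv_apply_mem hO (i := i) (x := j₀) ⟨f3, f4⟩
        have hinv : inP n (i, (Bperm n O i)⁻¹ j₀) := ⟨f1, f2, hBinv.1, hBinv.2⟩
        rw [thetaAux]
        rw [xiMap_formula hA hO x (i, (Bperm n O i)⁻¹ j₀) hinv]
        dsimp only
        rw [perm_apply_inv_self]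
        rw [theta_filter_eq hA hO]
        have hrw : ∀ j' ∈ ((Nfin n).filter fun j' => inP n (i, j') ∧ j' ≠ i ∧
            prevO n O i j' = j₀).attach,
            thetaAux n O (xiMap n O x) i j'.1 = x (i, j'.1) := by
          intro j' _
          have hj := j'.2
          rw [Finset.mem_filter] at hj
          obtain ⟨_, hP, hne, hprev⟩ := hj
          have hlt := (prevO_facts hA hO hP hne).2
          rw [hprev] at hlt
          exact ih j'.1 hP (by have := measure_lt j'.1 hP hlt; omega)
        rw [Finset.sum_congr rfl hrw, Finset.sum_attach _ (fun j => x (i, j))]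
        ring
    exact H ((2 * n + 1 - ordKey n k).toNat + 1) k hq (Nat.lt_succ_self _)
  · rw [if_neg hq]
    unfold xiMap
    rw [if_neg hq]

lemma xi_theta {O : Finset (ℤ × ℤ)} (hA : Aset n ⊆ O) (hO : O ⊆ Pfin n)
    (y : (ℤ × ℤ) → ℝ) : xiMap n O (theta n O y) = y := by
  funext q
  by_cases hq : inP n q
  · obtain ⟨i, k⟩ := q
    rw [xiMap_formula hA hO _ (i, k) hq]
    dsimp only
    obtain ⟨f1, f2, f3, f4, f5, f6, f7, f8⟩ := inP_facts hq
    have hBk := Bperm_apply_mem hO (i := i) (x := k) ⟨f3, f4⟩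
    have hBkP : inP n (i, Bperm n O i k) := ⟨f1, f2, hBk.1, hBk.2⟩
    have h1 : theta n O y (i, Bperm n O i k) = thetaAux n O y i (Bperm n O i k) := by
      unfold theta
      rw [if_pos hBkP]
    rw [h1, thetaAux, perm_inv_apply_self, theta_filter_eq hA hO]
    have hrw : ∀ j' ∈ ((Nfin n).filter fun j' => inP n (i, j') ∧ j' ≠ i ∧
        prevO n O i j' = Bperm n O i k).attach,
        thetaAux n O y i j'.1 = theta n O y (i, j'.1) := by
      intro j' _
      have hj := j'.2
      rw [Finset.mem_filter] at hj
      unfold theta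
      rw [if_pos hj.2.1]
    rw [Finset.sum_congr rfl hrw, Finset.sum_attach _ (fun j => theta n O y (i, j))]
    ring
  · unfold xiMap
    rw [if_neg hq]
    unfold theta
    rw [if_neg hq]

lemma xi_linear {O : Finset (ℤ × ℤ)} (c : ℝ) (x y : (ℤ × ℤ) → ℝ) :
    xiMap n O (c • x + y) = c • xiMap n O x + xiMap n O y := by
  funext q
  simp only [Pi.add_apply, Pi.smul_apply, smul_eq_mul]
  unfold xiMap
  by_cases hq : inP n q
  · rw [if_pos hq, if_pos hq, if_pos hq]
    simp only [Pi.add_apply, Pi.smul_apply, smul_eq_mul]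
    rw [Finset.sum_add_distrib, Finset.sum_add_distrib, ← Finset.mul_sum, ← Finset.mul_sum]
    ring
  · rw [if_neg hq, if_neg hq, if_neg hq]
    simp only [Pi.add_apply, Pi.smul_apply, smul_eq_mul]

lemma xi_lat {O : Finset (ℤ × ℤ)} (x : (ℤ × ℤ) → ℝ) (hx : IsLat x) :
    IsLat (xiMap n O x) := by
  choose m hm using hx
  intro p
  by_cases hp : inP n p
  · refine ⟨(∑ j ∈ (Nfin n).filter (fun j => inP n (p.1, j) ∧ rMap n O p.1 j = p.2),
        m (p.1, j))
      - ∑ j ∈ (Nfin n).filter (fun j => inP n (p.1, j) ∧ j ≠ p.1 ∧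
          rMap n O p.1 (prevO n O p.1 j) = p.2), m (p.1, j), ?_⟩
    unfold xiMap
    rw [if_pos hp]
    simp only [hm]
    push_cast
    ring
  · exact ⟨m p, by unfold xiMap; rw [if_neg hp]; exact hm p⟩

lemma theta_lat {O : Finset (ℤ × ℤ)} (y : (ℤ × ℤ) → ℝ) (hy : IsLat y) :
    IsLat (theta n O y) := by
  choose m hm using hy
  have key : ∀ (t : ℕ) (i j₀ : ℤ), (2 * n + 1 - ordKey n j₀).toNat < t →
      ∃ mm : ℤ, thetaAux n O y i j₀ = mm := by
    intro t
    induction t with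
    | zero => intro i j₀ h; exact absurd h (Nat.not_lt_zero _)
    | succ t ih =>
      intro i j₀ hmeas
      have hterm : ∀ (j' : {x // x ∈ (Nfin n).filter fun j' => inP n (i, j') ∧ j' ≠ i ∧
          prevO n O i j' = j₀ ∧ ordKey n j₀ < ordKey n j'}),
          ∃ mm : ℤ, thetaAux n O y i j'.1 = mm := by
        intro j'
        have hj := j'.2
        rw [Finset.mem_filter] at hj
        obtain ⟨_, hP, _, _, hlt⟩ := hj
        exact ih i j'.1 (by have := measure_lt j'.1 hP hlt; omega)
      choose g hg using hterm
      refine ⟨m (i, (Bperm n O i)⁻¹ j₀) + ∑ j' ∈ ((Nfin n).filter fun j' => inP n (i, j') ∧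
        j' ≠ i ∧ prevO n O i j' = j₀ ∧ ordKey n j₀ < ordKey n j').attach, g j', ?_⟩
      rw [thetaAux, hm (i, (Bperm n O i)⁻¹ j₀), Finset.sum_congr rfl (fun j' _ => hg j')]
      push_cast
      ring
  intro p
  by_cases hp : inP n p
  · obtain ⟨mm, hmm⟩ := key ((2 * n + 1 - ordKey n p.2).toNat + 1) p.1 p.2 (Nat.lt_succ_self _)
    exact ⟨mm, by unfold theta; rw [if_pos hp]; exact hmm⟩
  · exact ⟨m p, by unfold theta; rw [if_neg hp]; exact hm p⟩

end AuxDev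

/-- The map `ξ` is unimodular: it is a linear bijection of `ℝ^P` mapping
the lattice `ℤ^P` onto itself (equivalently, its matrix is integer with determinant `±1`
and integer inverse). -/
theorem stmt9 (n : ℕ) (O : Finset (ℤ × ℤ)) (hA : Aset n ⊆ O) (hO : O ⊆ Pfin n) :
    (∀ (c : ℝ) (x y : (ℤ × ℤ) → ℝ),
      xiMap n O (c • x + y) = c • xiMap n O x + xiMap n O y) ∧
    Function.Bijective (xiMap n O) ∧
    (∀ x, IsLat x → IsLat (xiMap n O x)) ∧
    (∀ y, IsLat y → ∃ x, IsLat x ∧ xiMap n O x = y) := by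
  refine ⟨fun c x y => xi_linear c x y,
    Function.bijective_iff_has_inverse.mpr
      ⟨theta n O, fun x => theta_xi hA hO x, fun y => xi_theta hA hO y⟩,
    fun x hx => xi_lat x hx,
    fun y hy => ⟨theta n O y, theta_lat y hy, xi_theta hA hO y⟩⟩

end
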